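/- Mean change for convex powers: let $E \subseteq \mathbb{R}^n$ be Lebesgue-measurable with $|E| < \infty$, let $\eta \in L^\infty(E)$ be nonnegative with $\|\eta\|_{L^1(E)} > 0$, let $m \in (0,1)$, $p \ge 1/m$, and let $u$ be a nonnegative measurable function on $E$ with $\int_E u^{mp}\,\eta\,dx < \infty$. Then there is a constant $c_0 > 0$ depending only on $m$ and $p$ such that $\Big(\frac{1}{\|\eta\|_{L^1(E)}}\int_E \big|u^m - \big((u)_E^\eta\big)^m\big|^p \eta\,dx\Big)^{1/p} \le c_0 \Big(\frac{1}{\|\eta\|_{L^1(E)}}\int_E \big|u^m - (u^m)_E^\eta\big|^p \eta\,dx\Big)^{1/p} \le 2 c_0 \Big(\frac{1}{\|\eta\|_{L^1(E)}}\int_E \big|u^m - \big((u)_E^\eta\big)^m\big|^p \eta\,dx\Big)^{1/p}$. -/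

import Mathlib

open MeasureTheory
open scoped ENNReal NNReal

/-- Mean change for convex powers: for `m ∈ (0,1)` and `p ≥ 1/m` there is a constant
`c₀ > 0`, depending only on `m` and `p`, such that the weighted `L^p` deviation of `u^m`
from `((u)_E^η)^m` and from `(u^m)_E^η` are comparable (with constants `c₀` and `2c₀`). -/
theorem stmt_7 (m p : ℝ) (hm0 : 0 < m) (hm1 : m < 1) (hp : 1 / m ≤ p) :
    ∃ c₀ : ℝ, 0 < c₀ ∧
      ∀ (n : ℕ) (E : Set (Fin n → ℝ)), MeasurableSet E → volume E < ⊤ →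
        ∀ η u : (Fin n → ℝ) → ℝ, Measurable η → (∀ x ∈ E, 0 ≤ η x) →
          (∃ C : ℝ, ∀ x ∈ E, η x ≤ C) → 0 < ∫ x in E, η x →
          Measurable u → (∀ x, 0 ≤ u x) →
          IntegrableOn (fun x => u x ^ (m * p) * η x) E →
          (((∫ x in E, |u x ^ m - ((∫ y in E, u y * η y) / (∫ y in E, η y)) ^ m| ^ p * η x) /
              (∫ x in E, η x)) ^ (1 / p) ≤
            c₀ * ((∫ x in E,
                |u x ^ m - (∫ y in E, u y ^ m * η y) / (∫ y in E, η y)| ^ p * η x) /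
              (∫ x in E, η x)) ^ (1 / p) ∧
          c₀ * ((∫ x in E,
                |u x ^ m - (∫ y in E, u y ^ m * η y) / (∫ y in E, η y)| ^ p * η x) /
              (∫ x in E, η x)) ^ (1 / p) ≤
            2 * c₀ * ((∫ x in E,
                |u x ^ m - ((∫ y in E, u y * η y) / (∫ y in E, η y)) ^ m| ^ p * η x) /
              (∫ x in E, η x)) ^ (1 / p)) := by
  refine ⟨2, two_pos, ?_⟩
  intro n E hE hEfin η u hη hηnn hηbd hI hu hunn huint
  obtain ⟨C, hC⟩ := hηbd
  have hq1 : 1 < 1 / m := one_lt_one_div hm0 hm1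
  have hp1 : 1 < p := hq1.trans_le hp
  set Iη : ℝ := ∫ x in E, η x with hIη
  have hηae : 0 ≤ᵐ[volume.restrict E] η := (ae_restrict_iff' hE).mpr (ae_of_all _ hηnn)
  have hηint : IntegrableOn η E := by
    refine Measure.integrableOn_of_bounded (M := C) (ne_of_lt hEfin) hη.aestronglyMeasurable ?_
    exact (ae_restrict_iff' hE).mpr (ae_of_all _ fun x hx => by
      rw [Real.norm_eq_abs, abs_of_nonneg (hηnn x hx)]; exact hC x hx)
  set μw : Measure (Fin n → ℝ) :=
    (volume.restrict E).withDensity fun x => ENNReal.ofReal (η x) with hμw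
  have hsmul_ae : ∀ g : (Fin n → ℝ) → ℝ,
      (fun x => (η x).toNNReal • g x) =ᵐ[volume.restrict E] fun x => g x * η x := by
    intro g
    refine (ae_restrict_iff' hE).mpr (ae_of_all _ fun x hx => ?_)
    simp [NNReal.smul_def, Real.coe_toNNReal _ (hηnn x hx), mul_comm]
  have hint_iff : ∀ g : (Fin n → ℝ) → ℝ,
      Integrable g μw ↔ IntegrableOn (fun x => g x * η x) E := by
    intro g
    rw [hμw]
    rw [show (fun x => ENNReal.ofReal (η x)) = fun x => ((η x).toNNReal : ℝ≥0∞) from rfl]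
    rw [integrable_withDensity_iff_integrable_smul hη.real_toNNReal]
    exact integrable_congr (hsmul_ae g)
  have hI_eq : ∀ g : (Fin n → ℝ) → ℝ, ∫ x, g x ∂μw = ∫ x in E, g x * η x := by
    intro g
    rw [hμw]
    rw [show (fun x => ENNReal.ofReal (η x)) = fun x => ((η x).toNNReal : ℝ≥0∞) from rfl]
    rw [integral_withDensity_eq_integral_smul hη.real_toNNReal]
    exact integral_congr_ae (hsmul_ae g)
  have hμuniv : μw Set.univ = ENNReal.ofReal Iη := by
    rw [hμw, withDensity_apply _ MeasurableSet.univ, Measure.restrict_univ,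
      ← ofReal_integral_eq_lintegral_ofReal hηint hηae]
  have hIne : ENNReal.ofReal Iη ≠ 0 := (ENNReal.ofReal_pos.mpr hI).ne'
  set ν : Measure (Fin n → ℝ) := (ENNReal.ofReal Iη)⁻¹ • μw with hν
  haveI hνprob : IsProbabilityMeasure ν := by
    constructor
    rw [hν, Measure.smul_apply, hμuniv, smul_eq_mul,
      ENNReal.inv_mul_cancel hIne ENNReal.ofReal_ne_top]
  have hνint_iff : ∀ g : (Fin n → ℝ) → ℝ,
      Integrable g ν ↔ IntegrableOn (fun x => g x * η x) E := by
    intro g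
    rw [hν, integrable_smul_measure (ENNReal.inv_ne_zero.mpr ENNReal.ofReal_ne_top)
      (ENNReal.inv_ne_top.mpr hIne)]
    exact hint_iff g
  have hνI : ∀ g : (Fin n → ℝ) → ℝ, ∫ x, g x ∂ν = (∫ x in E, g x * η x) / Iη := by
    intro g
    rw [hν, integral_smul_measure, hI_eq, ENNReal.toReal_inv,
      ENNReal.toReal_ofReal hI.le, smul_eq_mul, inv_mul_eq_div]
  -- exponents
  have hp0 : (0:ℝ) < p := by linarith
  set P : ℝ≥0∞ := ENNReal.ofReal p with hP
  set Q : ℝ≥0∞ := ENNReal.ofReal (1/m) with hQ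
  have hPne0 : P ≠ 0 := by
    rw [hP]; exact (ENNReal.ofReal_pos.mpr hp0).ne'
  have hPtop : P ≠ ∞ := ENNReal.ofReal_ne_top
  have hP1 : 1 ≤ P := by
    rw [hP]; exact ENNReal.one_le_ofReal.mpr hp1.le
  have hPtoReal : P.toReal = p := ENNReal.toReal_ofReal hp0.le
  have hQne0 : Q ≠ 0 := by
    rw [hQ]; exact (ENNReal.ofReal_pos.mpr (by positivity)).ne'
  have hQtop : Q ≠ ∞ := ENNReal.ofReal_ne_top
  have hQ1 : 1 ≤ Q := by
    rw [hQ]; exact ENNReal.one_le_ofReal.mpr hq1.le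
  have hQP : Q ≤ P := by
    rw [hP, hQ]; exact ENNReal.ofReal_le_ofReal hp
  have hQtoReal : Q.toReal = 1/m := ENNReal.toReal_ofReal (by positivity)
  -- the function v = u ^ m
  have hvmeas : Measurable fun x => u x ^ m :=
    (Real.continuous_rpow_const hm0.le).measurable.comp hu
  have hvnn : ∀ x, 0 ≤ u x ^ m := fun x => Real.rpow_nonneg (hunn x) m
  have hnormint : Integrable (fun x => ‖u x ^ m‖ ^ p) ν := by
    rw [hνint_iff]
    have : (fun x => ‖u x ^ m‖ ^ p * η x) = fun x => u x ^ (m*p) * η x := by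
      funext x
      rw [Real.norm_eq_abs, abs_of_nonneg (hvnn x), ← Real.rpow_mul (hunn x)]
    rw [this]; exact huint
  have hvP : MemLp (fun x => u x ^ m) P ν := by
    refine (memLp_norm_rpow_iff (q := P) hvmeas.aestronglyMeasurable hPne0 hPtop).mp ?_
    rw [ENNReal.div_self hPne0 hPtop, memLp_one_iff_integrable, hPtoReal]
    exact hnormint
  have hvQ : MemLp (fun x => u x ^ m) Q ν := hvP.mono_exponent hQP
  have hv1 : Integrable (fun x => u x ^ m) ν := hvP.integrable hP1
  have huν : Integrable u ν := by
    have h1 := hvQ.integrable_norm_rpow hQne0 hQtop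
    refine h1.congr (ae_of_all _ fun x => ?_)
    show ‖u x ^ m‖ ^ Q.toReal = u x
    rw [hQtoReal, Real.norm_eq_abs, abs_of_nonneg (hvnn x), ← Real.rpow_mul (hunn x),
      mul_one_div, div_self hm0.ne', Real.rpow_one]
  -- means
  set abar : ℝ := ∫ x, u x ∂ν with habar
  set vbar : ℝ := ∫ x, u x ^ m ∂ν with hvbar
  have habar_nn : 0 ≤ abar := integral_nonneg fun x => hunn x
  have hvbar_nn : 0 ≤ vbar := integral_nonneg fun x => hvnn x
  -- Memℒp of centered functions
  have hA : MemLp (fun x => u x ^ m - abar ^ m) P ν := hvP.sub (memLp_const _)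
  have hB : MemLp (fun x => u x ^ m - vbar) P ν := hvP.sub (memLp_const _)
  set NA : ℝ≥0∞ := eLpNorm (fun x => u x ^ m - abar ^ m) P ν with hNA
  set NB : ℝ≥0∞ := eLpNorm (fun x => u x ^ m - vbar) P ν with hNB
  have hNAtop : NA ≠ ∞ := hA.eLpNorm_ne_top
  have hNBtop : NB ≠ ∞ := hB.eLpNorm_ne_top
  -- eLpNorm expressed via real integrals
  have hnorm_eq : ∀ c : ℝ, MemLp (fun x => u x ^ m - c) P ν →
      (eLpNorm (fun x => u x ^ m - c) P ν).toReal
        = (∫ x, |u x ^ m - c| ^ p ∂ν) ^ (1/p) := by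
    intro c hc
    rw [hc.eLpNorm_eq_integral_rpow_norm hPne0 hPtop]
    rw [ENNReal.toReal_ofReal
      (Real.rpow_nonneg (integral_nonneg fun x => by positivity) _)]
    simp only [Real.norm_eq_abs, hPtoReal]
    rw [one_div]
  have hNAeq : NA.toReal = (∫ x, |u x ^ m - abar ^ m| ^ p ∂ν) ^ (1/p) := hnorm_eq _ hA
  have hNBeq : NB.toReal = (∫ x, |u x ^ m - vbar| ^ p ∂ν) ^ (1/p) := hnorm_eq _ hB
  -- eLpNorm of constants
  have hconst : ∀ (r : ℝ≥0∞) (c : ℝ), r ≠ 0 →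
      eLpNorm (fun _ : Fin n → ℝ => c) r ν = ENNReal.ofReal |c| := by
    intro r c hr
    rw [eLpNorm_const c hr (IsProbabilityMeasure.ne_zero ν), measure_univ, ENNReal.one_rpow,
      mul_one, Real.enorm_eq_ofReal_abs]
  -- triangle inequalities
  have hT1 : NA ≤ NB + ENNReal.ofReal |vbar - abar ^ m| := by
    have hfg : (fun x => u x ^ m - abar ^ m)
        = (fun x => u x ^ m - vbar) + fun _ => vbar - abar ^ m := by
      funext x; simp only [Pi.add_apply]; ring
    rw [hNA, hfg]
    refine (eLpNorm_add_le hB.aestronglyMeasurable aestronglyMeasurable_const hP1).trans ?_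
    exact add_le_add (le_of_eq hNB.symm) (le_of_eq (hconst P _ hPne0))
  have hT2 : NB ≤ NA + ENNReal.ofReal |vbar - abar ^ m| := by
    have hfg : (fun x => u x ^ m - vbar)
        = (fun x => u x ^ m - abar ^ m) + fun _ => abar ^ m - vbar := by
      funext x; simp only [Pi.add_apply]; ring
    rw [hNB, hfg]
    refine (eLpNorm_add_le hA.aestronglyMeasurable aestronglyMeasurable_const hP1).trans ?_
    refine add_le_add (le_of_eq hNA.symm) (le_of_eq ?_)
    rw [hconst P _ hPne0, abs_sub_comm]
  -- |vbar - abar ^ m| ≤ NA.toReal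
  have hF1 : |vbar - abar ^ m| ≤ NA.toReal := by
    have hsub : vbar - abar ^ m = ∫ x, (u x ^ m - abar ^ m) ∂ν := by
      rw [integral_sub hv1 (integrable_const _), integral_const, probReal_univ, one_smul, hvbar]
    have hA1 : MemLp (fun x => u x ^ m - abar ^ m) (1 : ℝ≥0∞) ν :=
      hA.mono_exponent hP1
    have h3 := hA1.eLpNorm_eq_integral_rpow_norm one_ne_zero ENNReal.one_ne_top
    simp only [ENNReal.toReal_one, inv_one, Real.rpow_one, Real.norm_eq_abs] at h3
    calc |vbar - abar ^ m| = |∫ x, (u x ^ m - abar ^ m) ∂ν| := by rw [hsub]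
      _ ≤ ∫ x, |u x ^ m - abar ^ m| ∂ν := by
          simpa [Real.norm_eq_abs] using
            norm_integral_le_integral_norm (μ := ν) (fun x => u x ^ m - abar ^ m)
      _ = (eLpNorm (fun x => u x ^ m - abar ^ m) 1 ν).toReal := by
          rw [h3, ENNReal.toReal_ofReal (integral_nonneg fun x => abs_nonneg _)]
      _ ≤ NA.toReal := by
          refine ENNReal.toReal_mono hNAtop ?_
          rw [hNA]
          exact eLpNorm_le_eLpNorm_of_exponent_le hP1 hA.aestronglyMeasurable
  -- the Q-norm of u^m is abar ^ m
  have euQ : (fun a => ‖u a ^ m‖ ^ Q.toReal) = u := funext fun x => by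
    rw [hQtoReal, Real.norm_eq_abs, abs_of_nonneg (hvnn x), ← Real.rpow_mul (hunn x),
      mul_one_div, div_self hm0.ne', Real.rpow_one]
  have hQv_eq : eLpNorm (fun x => u x ^ m) Q ν = ENNReal.ofReal (abar ^ m) := by
    rw [hvQ.eLpNorm_eq_integral_rpow_norm hQne0 hQtop]
    congr 1
    simp only [euQ]
    rw [← habar, hQtoReal, inv_div, div_one]
  have hvbar_le : vbar ≤ abar ^ m := by
    have hv1' : MemLp (fun x => u x ^ m) (1 : ℝ≥0∞) ν := hvQ.mono_exponent hQ1
    have h3 := hv1'.eLpNorm_eq_integral_rpow_norm one_ne_zero ENNReal.one_ne_top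
    simp only [ENNReal.toReal_one, inv_one, Real.rpow_one, Real.norm_eq_abs] at h3
    have e1 : vbar = ∫ x, |u x ^ m| ∂ν := by
      rw [hvbar]; congr 1; funext x; rw [abs_of_nonneg (hvnn x)]
    have e2 : (eLpNorm (fun x => u x ^ m) Q ν).toReal = abar ^ m := by
      rw [hQv_eq, ENNReal.toReal_ofReal (Real.rpow_nonneg habar_nn m)]
    calc vbar = ∫ x, |u x ^ m| ∂ν := e1
      _ = (eLpNorm (fun x => u x ^ m) 1 ν).toReal := by
          rw [h3, ENNReal.toReal_ofReal (integral_nonneg fun x => abs_nonneg _)]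
      _ ≤ (eLpNorm (fun x => u x ^ m) Q ν).toReal :=
          ENNReal.toReal_mono hvQ.eLpNorm_ne_top
            (eLpNorm_le_eLpNorm_of_exponent_le hQ1 hvQ.aestronglyMeasurable)
      _ = abar ^ m := e2
  -- abar ^ m ≤ NB.toReal + vbar
  have hT3 : eLpNorm (fun x => u x ^ m) Q ν ≤ NB + ENNReal.ofReal vbar := by
    have hfg : (fun x : Fin n → ℝ => u x ^ m)
        = (fun x => u x ^ m - vbar) + fun _ => vbar := by
      funext x; simp
    rw [hfg]
    have hBQ : MemLp (fun x => u x ^ m - vbar) Q ν := hB.mono_exponent hQP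
    refine (eLpNorm_add_le hBQ.aestronglyMeasurable aestronglyMeasurable_const hQ1).trans ?_
    refine add_le_add ?_ (le_of_eq ?_)
    · refine (eLpNorm_le_eLpNorm_of_exponent_le hQP hB.aestronglyMeasurable).trans
        (le_of_eq hNB.symm)
    · rw [hconst Q _ hQne0, abs_of_nonneg hvbar_nn]
  have hG : abar ^ m - vbar ≤ NB.toReal := by
    have h := ENNReal.toReal_mono
      (ENNReal.add_ne_top.mpr ⟨hNBtop, ENNReal.ofReal_ne_top⟩) (hQv_eq ▸ hT3)
    rw [ENNReal.toReal_add hNBtop ENNReal.ofReal_ne_top,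
      ENNReal.toReal_ofReal (Real.rpow_nonneg habar_nn m),
      ENNReal.toReal_ofReal hvbar_nn] at h
    linarith
  have habs2 : |vbar - abar ^ m| ≤ NB.toReal := by
    rw [abs_sub_comm, abs_of_nonneg (by linarith)]
    exact hG
  -- real versions of the triangle inequalities
  have hAR : NA.toReal ≤ 2 * NB.toReal := by
    have h := ENNReal.toReal_mono
      (ENNReal.add_ne_top.mpr ⟨hNBtop, ENNReal.ofReal_ne_top⟩) hT1
    rw [ENNReal.toReal_add hNBtop ENNReal.ofReal_ne_top,
      ENNReal.toReal_ofReal (abs_nonneg _)] at h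
    linarith
  have hBR : NB.toReal ≤ 2 * NA.toReal := by
    have h := ENNReal.toReal_mono
      (ENNReal.add_ne_top.mpr ⟨hNAtop, ENNReal.ofReal_ne_top⟩) hT2
    rw [ENNReal.toReal_add hNAtop ENNReal.ofReal_ne_top,
      ENNReal.toReal_ofReal (abs_nonneg _)] at h
    linarith
  -- back to the stated quantities
  have em1 : (∫ y in E, u y * η y) / Iη = abar := (hνI u).symm
  have em2 : (∫ y in E, u y ^ m * η y) / Iη = vbar := (hνI fun x => u x ^ m).symm
  rw [em1, em2]
  have eA : (∫ x in E, |u x ^ m - abar ^ m| ^ p * η x) / Iη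
      = ∫ x, |u x ^ m - abar ^ m| ^ p ∂ν := (hνI fun x => |u x ^ m - abar ^ m| ^ p).symm
  have eB : (∫ x in E, |u x ^ m - vbar| ^ p * η x) / Iη
      = ∫ x, |u x ^ m - vbar| ^ p ∂ν := (hνI fun x => |u x ^ m - vbar| ^ p).symm
  rw [eA, eB, ← hNAeq, ← hNBeq]
  constructor
  · linarith
  · linarith
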